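/- Let α(γ) = arcsin(((μ² − 1)(R − s)² + d(γ)²)/(2μ d(γ)(R − s))) and δ(γ) = arctan2(s sin γ, r − s cos γ), where d(γ) = √(r² − 2rs cos γ + s²). Then the derivative with respect to γ of φ(γ) = α(γ) − δ(γ) vanishes at γ* = arccos((R² + r² − μ²(R − s)²)/(2rR)), provided the arguments of arccos and arcsin lie in the open interval (−1, 1) and d(γ*) > 0. -/

import Mathlib

open Real

/-- The derivative of φ(γ) = α(γ) − δ(γ) vanishes at
γ* = arccos((R² + r² − μ²(R − s)²)/(2rR)).  Here arctan2(y, x) is expressed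
as the argument of the complex number x + y i. -/
theorem stmt_5 (μ R s r : ℝ) (hμ : 0 < μ) (hμ1 : μ ≤ 1) (hR : 0 < R)
    (hs : 0 ≤ s) (hsR : s < R) (hr : 0 < r)
    (d : ℝ → ℝ) (hd : d = fun γ => Real.sqrt (r ^ 2 - 2 * r * s * Real.cos γ + s ^ 2))
    (α : ℝ → ℝ)
    (hα : α = fun γ =>
      Real.arcsin (((μ ^ 2 - 1) * (R - s) ^ 2 + d γ ^ 2) / (2 * μ * d γ * (R - s))))
    (δ : ℝ → ℝ)
    (hδ : δ = fun γ =>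
      Complex.arg ((r - s * Real.cos γ : ℝ) + (s * Real.sin γ : ℝ) * Complex.I))
    (γstar : ℝ)
    (hγ : γstar = Real.arccos ((R ^ 2 + r ^ 2 - μ ^ 2 * (R - s) ^ 2) / (2 * r * R)))
    (hcos : (R ^ 2 + r ^ 2 - μ ^ 2 * (R - s) ^ 2) / (2 * r * R) ∈ Set.Ioo (-1 : ℝ) 1)
    (hsin : ((μ ^ 2 - 1) * (R - s) ^ 2 + d γstar ^ 2) / (2 * μ * d γstar * (R - s)) ∈
      Set.Ioo (-1 : ℝ) 1)
    (hdpos : 0 < d γstar) :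
    HasDerivAt (fun γ => α γ - δ γ) 0 γstar := by
  obtain ⟨hV1, hV2⟩ := hcos
  have hRs : (0:ℝ) < R - s := by linarith
  set c : ℝ := Real.cos γstar with hcdef
  set sn : ℝ := Real.sin γstar with hsndef
  have hc : c = (R ^ 2 + r ^ 2 - μ ^ 2 * (R - s) ^ 2) / (2 * r * R) := by
    rw [hcdef, hγ, Real.cos_arccos hV1.le hV2.le]
  have hsnpos : 0 < sn := by
    rw [hsndef, hγ, Real.sin_arccos]
    exact Real.sqrt_pos.mpr (by nlinarith)
  have e1 : sn ^ 2 = 1 - c ^ 2 := by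
    have := Real.sin_sq_add_cos_sq γstar
    rw [← hcdef, ← hsndef] at this; linarith
  set D : ℝ := d γstar with hDdef
  have hF : D = Real.sqrt (r ^ 2 - 2 * r * s * c + s ^ 2) := by rw [hDdef, hd]
  have hfpos : 0 < r ^ 2 - 2 * r * s * c + s ^ 2 := Real.sqrt_pos.mp (hF ▸ hdpos)
  have hD2 : D ^ 2 = r ^ 2 - 2 * r * s * c + s ^ 2 := by
    rw [hF]; exact Real.sq_sqrt hfpos.le
  have hDne : D ≠ 0 := ne_of_gt hdpos
  -- derivative of d
  have hfd : HasDerivAt (fun γ => r ^ 2 - 2 * r * s * Real.cos γ + s ^ 2)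
      (2 * r * s * sn) γstar := by
    have h1 := ((Real.hasDerivAt_cos γstar).const_mul (2 * r * s)).const_sub (r ^ 2)
    have h2 := h1.add_const (s ^ 2)
    convert h2 using 1
    · rfl
    · rfl
    rw [hsndef]; ring
  have hdD : HasDerivAt d (r * s * sn / D) γstar := by
    rw [hd]
    have := hfd.sqrt (ne_of_gt hfpos)
    convert this using 1
    rw [← hcdef, ← hF]
    field_simp
  -- derivative of the arcsin argument
  have hu : HasDerivAt (fun γ => (μ ^ 2 - 1) * (R - s) ^ 2 + d γ ^ 2)
      (2 * r * s * sn) γstar := by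
    have h2 := ((hdD.pow 2).const_add ((μ ^ 2 - 1) * (R - s) ^ 2))
    convert h2 using 1
    · rfl
    · rfl
    · rfl
    rw [← hDdef]
    field_simp
    ring
  have hv : HasDerivAt (fun γ => 2 * μ * d γ * (R - s))
      (2 * μ * (r * s * sn / D) * (R - s)) γstar :=
    (hdD.const_mul (2 * μ)).mul_const (R - s)
  have hvne : 2 * μ * D * (R - s) ≠ 0 := by positivity
  have hA : HasDerivAt (fun γ => ((μ ^ 2 - 1) * (R - s) ^ 2 + d γ ^ 2) / (2 * μ * d γ * (R - s)))
      ((2 * r * s * sn * (2 * μ * D * (R - s)) -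
        ((μ ^ 2 - 1) * (R - s) ^ 2 + D ^ 2) * (2 * μ * (r * s * sn / D) * (R - s))) /
        (2 * μ * D * (R - s)) ^ 2) γstar := hu.div hv hvne
  have harc := Real.hasDerivAt_arcsin (ne_of_gt hsin.1) (ne_of_lt hsin.2)
  have hαD := harc.comp γstar hA
  simp only [Function.comp_def] at hαD
  rw [← hα] at hαD
  -- derivative of δ via complex log
  have hx : HasDerivAt (fun γ => r - s * Real.cos γ) (s * sn) γstar := by
    have h1 := ((Real.hasDerivAt_cos γstar).const_mul s).const_sub (r : ℝ)
    convert h1 using 1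
    · rfl
    · rfl
    rw [hsndef]; ring
  have hy : HasDerivAt (fun γ => s * Real.sin γ) (s * c) γstar := by
    have h1 := (Real.hasDerivAt_sin γstar).const_mul s
    convert h1 using 1
  set z : ℂ := (↑(r - s * c) + ↑(s * sn) * Complex.I) with hzdef
  have hg : HasDerivAt (fun γ : ℝ => ((r - s * Real.cos γ : ℝ) : ℂ) +
      ((s * Real.sin γ : ℝ) : ℂ) * Complex.I)
      ((s * sn : ℝ) + (s * c : ℝ) * Complex.I) γstar :=
    (hx.ofReal_comp).add ((hy.ofReal_comp).mul_const Complex.I)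
  have hzslit : z ∈ Complex.slitPlane := by
    rw [Complex.mem_slitPlane_iff]
    rcases eq_or_lt_of_le hs with h0 | h0
    · left; simp [hzdef, ← h0, hr]
    · right; simp only [hzdef, Complex.add_im, Complex.ofReal_im, Complex.mul_im,
        Complex.ofReal_re, Complex.I_im, Complex.I_re, mul_zero, mul_one, zero_add]
      positivity
  have hlog := (Complex.hasDerivAt_log hzslit).complexToReal_fderiv
  have hcomp := hlog.comp_hasDerivAt γstar hg
  have hcomp' : HasDerivAt (fun γ : ℝ => Complex.log (((r - s * Real.cos γ : ℝ) : ℂ) +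
      ((s * Real.sin γ : ℝ) : ℂ) * Complex.I))
      (z⁻¹ * ((s * sn : ℝ) + (s * c : ℝ) * Complex.I)) γstar := by
    simpa [Function.comp_def, smul_eq_mul] using hcomp
  have him := Complex.imCLM.hasFDerivAt.comp_hasDerivAt γstar hcomp'
  have hδD : HasDerivAt δ ((z⁻¹ * ((s * sn : ℝ) + (s * c : ℝ) * Complex.I)).im) γstar := by
    rw [hδ]
    simpa [Function.comp_def, Complex.log_im] using him
  have htot := hαD.sub hδD
  convert htot using 1
  · rfl
  · rfl
  · rfl
  have hN : (r - s * c) ^ 2 + (s * sn) ^ 2 = D ^ 2 := by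
    rw [hD2]; linear_combination s ^ 2 * e1
  have Ed : (z⁻¹ * ((s * sn : ℝ) + (s * c : ℝ) * Complex.I)).im = s * (r * c - s) / D ^ 2 := by
    rw [hzdef]
    simp only [Complex.mul_im, Complex.inv_re, Complex.inv_im, Complex.normSq_apply,
      Complex.add_re, Complex.add_im, Complex.ofReal_re, Complex.ofReal_im, Complex.mul_re,
      Complex.mul_im, Complex.I_re, Complex.I_im, mul_zero, mul_one, zero_sub, sub_zero,
      zero_add, zero_mul, add_zero, neg_zero]
    rw [show (r - s * c) * (r - s * c) + s * sn * (s * sn) = D ^ 2 from by linear_combination hN]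
    linear_combination (-(s ^ 2) / D ^ 2) * e1
  have key : (2 * μ * D * (R - s)) ^ 2 - ((μ ^ 2 - 1) * (R - s) ^ 2 + D ^ 2) ^ 2 =
      (2 * r * (R - s)) ^ 2 * sn ^ 2 := by
    rw [e1, show (2 * μ * D * (R - s)) ^ 2 = (2 * μ * (R - s)) ^ 2 * D ^ 2 from by ring,
      hD2, hc]
    field_simp
    ring
  have h4 : 1 - (((μ ^ 2 - 1) * (R - s) ^ 2 + D ^ 2) / (2 * μ * D * (R - s))) ^ 2 =
      (r * sn / (μ * D)) ^ 2 := by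
    rw [div_pow, div_pow, one_sub_div (by positivity), key,
      div_eq_div_iff (by positivity) (by positivity)]
    ring
  have hsqrtA : Real.sqrt (1 - (((μ ^ 2 - 1) * (R - s) ^ 2 + D ^ 2) /
      (2 * μ * D * (R - s))) ^ 2) = r * sn / (μ * D) := by
    rw [h4, Real.sqrt_sq (by positivity)]
  have h2 : D ^ 2 - (μ ^ 2 - 1) * (R - s) ^ 2 = 2 * (R - s) * (r * c - s) := by
    rw [hD2, hc]; field_simp; ring
  rw [Ed, hsqrtA]
  have hsnne : sn ≠ 0 := ne_of_gt hsnpos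
  have hRsne : (R - s) ≠ 0 := ne_of_gt hRs
  field_simp
  linear_combination (-s) * h2
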